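/- Let ℓ be an odd prime, d a unit of ℤ/ℓℤ, and t ∈ ℤ/ℓℤ. Then the number of matrices γ ∈ GL₂(ℤ/ℓℤ) with det(γ) = d and tr(γ) = t equals: ℓ² + ℓ if t² − 4d is a quadratic residue; ℓ² if t² − 4d = 0; and ℓ² − ℓ if t² − 4d is a quadratic non-residue. -/

import Mathlib

open Matrix Finset
section aux
variable {F : Type*} [Field F] [Fintype F] [DecidableEq F]

lemma pair_card_ne (m : F) (hm : m ≠ 0) :
    Fintype.card {q : F × F // q.1 * q.2 = m} = Fintype.card F - 1 := by
  have e : {q : F × F // q.1 * q.2 = m} ≃ Fˣ :=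
    { toFun := fun q => Units.mk0 q.1.1 (fun h => hm (by rw [← q.2, h, zero_mul]))
      invFun := fun x => ⟨(x.1, x⁻¹.1 * m), by
        have : (x.1 : F) ≠ 0 := x.ne_zero
        field_simp
        exact x.mul_inv⟩
      left_inv := fun q => by
        obtain ⟨⟨a, b⟩, hab⟩ := q
        have h1 : a ≠ 0 := fun h => hm (by rw [← hab, h, zero_mul])
        apply Subtype.ext
        apply Prod.ext
        · rfl
        · simp only [Units.val_inv_eq_inv_val, Units.val_mk0]
          rw [← hab, inv_mul_cancel_left₀ h1]
      right_inv := fun x => Units.ext rfl }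
  rw [Fintype.card_congr e, Fintype.card_units]

lemma pair_card_zero :
    Fintype.card {q : F × F // q.1 * q.2 = (0:F)} = 2 * Fintype.card F - 1 := by
  have e : {q : F × F // ¬ q.1 * q.2 = (0:F)} ≃ {x : F // x ≠ 0} × {x : F // x ≠ 0} :=
    { toFun := fun q => (⟨q.1.1, fun h => q.2 (by rw [h, zero_mul])⟩,
        ⟨q.1.2, fun h => q.2 (by rw [h, mul_zero])⟩)
      invFun := fun p => ⟨(p.1.1, p.2.1), mul_ne_zero p.1.2 p.2.2⟩
      left_inv := fun q => rfl
      right_inv := fun p => rfl }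
  have hc : Fintype.card {x : F // x ≠ 0} = Fintype.card F - 1 := by
    rw [← Fintype.card_units (α := F)]
    exact (Fintype.card_congr (unitsEquivNeZero (G₀ := F))).symm
  have h1 : Fintype.card {q : F × F // ¬ q.1 * q.2 = (0:F)} = (Fintype.card F - 1) * (Fintype.card F - 1) := by
    rw [Fintype.card_congr e, Fintype.card_prod, hc]
  have h2 := Fintype.card_subtype_compl (fun q : F × F => q.1 * q.2 = 0)
  have h3 : Fintype.card {q : F × F // q.1 * q.2 = (0:F)} ≤ Fintype.card (F × F) :=
    Fintype.card_subtype_le _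
  rw [h1] at h2
  rw [Fintype.card_prod] at h2 h3
  have hq : 1 ≤ Fintype.card F := Fintype.card_pos
  obtain ⟨k, hk⟩ : ∃ k, Fintype.card F = k + 1 := ⟨Fintype.card F - 1, by omega⟩
  rw [hk] at h2 h3 hq ⊢
  simp only [Nat.add_sub_cancel] at *
  have : (k+1)*(k+1) = k*k + 2*k + 1 := by ring
  omega

def matrix_sigma_equiv (d t : F) :
    {M : Matrix (Fin 2) (Fin 2) F // M.det = d ∧ M.trace = t} ≃
      (Σ a : F, {q : F × F // q.1 * q.2 = a * (t - a) - d}) :=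
  { toFun := fun M => ⟨M.1 0 0, ⟨(M.1 0 1, M.1 1 0), by
      obtain ⟨M, hdet, htr⟩ := M
      rw [Matrix.det_fin_two] at hdet
      rw [Matrix.trace_fin_two] at htr
      linear_combination (M 0 0) * htr - hdet⟩⟩
    invFun := fun p => ⟨!![p.1, p.2.1.1; p.2.1.2, t - p.1], by
      constructor
      · rw [Matrix.det_fin_two_of]
        linear_combination - p.2.2
      · rw [Matrix.trace_fin_two_of]
        ring⟩
    left_inv := fun M => by
      obtain ⟨M, hdet, htr⟩ := M
      rw [Matrix.trace_fin_two] at htr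
      apply Subtype.ext
      simp only
      have h11 : t - M 0 0 = M 1 1 := by linear_combination -htr
      rw [h11]
      exact (Matrix.eta_fin_two M).symm
    right_inv := fun p => by
      obtain ⟨a, ⟨b, c⟩, h⟩ := p
      simp only
      congr 1 }

lemma main_count (d t : F) :
    Nat.card {M : Matrix (Fin 2) (Fin 2) F // M.det = d ∧ M.trace = t} =
      Fintype.card F * (Fintype.card F - 1) +
        (univ.filter fun a : F => a * (t - a) - d = 0).card * Fintype.card F := by
  rw [Nat.card_eq_fintype_card, Fintype.card_congr (matrix_sigma_equiv d t),
    Fintype.card_sigma]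
  have hq : 1 ≤ Fintype.card F := Fintype.card_pos
  have key : ∀ a : F, Fintype.card {q : F × F // q.1 * q.2 = a * (t - a) - d} =
      (Fintype.card F - 1) + (if a * (t - a) - d = 0 then Fintype.card F else 0) := by
    intro a
    by_cases h : a * (t - a) - d = 0
    · rw [if_pos h, h, pair_card_zero]; omega
    · rw [if_neg h, pair_card_ne _ h]; omega
  simp only [key]
  rw [Finset.sum_add_distrib, Finset.sum_const, ← Finset.sum_filter, Finset.sum_const,
    smul_eq_mul, smul_eq_mul, Finset.card_univ]

lemma root_count (d t : F) (h2 : (2:F) ≠ 0) :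
    (univ.filter fun a : F => a * (t - a) - d = 0).card =
      (univ.filter fun s : F => s ^ 2 = t ^ 2 - 4 * d).card := by
  apply Finset.card_bij' (fun a _ => 2 * a - t) (fun s _ => (s + t) / 2)
  · intro a ha
    simp only [mem_filter, mem_univ, true_and] at ha ⊢
    linear_combination (-4 : F) * ha
  · intro s hs
    simp only [mem_filter, mem_univ, true_and] at hs ⊢
    field_simp
    linear_combination -hs
  · intro a _
    field_simp
    ring
  · intro s _
    field_simp
    ring

lemma sq_filter_sq (u : F) (hu : u ≠ 0) (h2 : (2:F) ≠ 0) :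
    (univ.filter fun s : F => s ^ 2 = u ^ 2).card = 2 := by
  have hset : (univ.filter fun s : F => s ^ 2 = u ^ 2) = {u, -u} := by
    ext s
    simp only [mem_filter, mem_univ, true_and, mem_insert, mem_singleton]
    constructor
    · intro h
      have : (s - u) * (s + u) = 0 := by linear_combination h
      rcases mul_eq_zero.mp this with h' | h'
      · exact Or.inl (sub_eq_zero.mp h')
      · exact Or.inr (eq_neg_of_add_eq_zero_left h')
    · rintro (rfl | rfl) <;> ring
  rw [hset]
  refine Finset.card_pair ?_
  intro h
  apply hu
  have : 2 * u = 0 := by linear_combination h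
  rcases mul_eq_zero.mp this with h' | h'
  · exact absurd h' h2
  · exact h'

lemma sq_filter_zero : (univ.filter fun s : F => s ^ 2 = (0:F)).card = 1 := by
  have hset : (univ.filter fun s : F => s ^ 2 = (0:F)) = {0} := by
    ext s
    simp [pow_eq_zero_iff]
  rw [hset, Finset.card_singleton]

lemma sq_filter_nonsq (c : F) (hcu : c ≠ 0) (hc : ¬ ∃ u : Fˣ, c = (u:F) ^ 2) :
    (univ.filter fun s : F => s ^ 2 = c).card = 0 := by
  rw [Finset.card_eq_zero]
  ext s
  simp only [mem_filter, mem_univ, true_and, Finset.notMem_empty, iff_false]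
  intro h
  have hs : s ≠ 0 := by
    intro hs0
    rw [hs0] at h
    exact hcu (by simpa using h.symm)
  exact hc ⟨Units.mk0 s hs, h.symm⟩

noncomputable def gl_matrix_equiv (d : Fˣ) (t : F) :
    {γ : Matrix.GeneralLinearGroup (Fin 2) F //
        (γ : Matrix (Fin 2) (Fin 2) F).det = (d : F) ∧
        Matrix.trace (γ : Matrix (Fin 2) (Fin 2) F) = t} ≃
      {M : Matrix (Fin 2) (Fin 2) F // M.det = (d : F) ∧ M.trace = t} :=
  { toFun := fun γ => ⟨γ.1.1, γ.2⟩
    invFun := fun M => ⟨((Matrix.isUnit_iff_isUnit_det M.1).mpr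
        (by rw [M.2.1]; exact d.isUnit)).unit, by
      constructor
      · rw [IsUnit.unit_spec]; exact M.2.1
      · rw [IsUnit.unit_spec]; exact M.2.2⟩
    left_inv := fun γ => Subtype.ext (Units.ext rfl)
    right_inv := fun M => Subtype.ext rfl }
end aux

/-- For an odd prime ℓ, a unit d of ℤ/ℓℤ and t ∈ ℤ/ℓℤ, the number of matrices
γ ∈ GL₂(ℤ/ℓℤ) with det γ = d and tr γ = t is: ℓ² + ℓ if t² − 4d is a quadratic
residue; ℓ² if t² − 4d = 0; ℓ² − ℓ if t² − 4d is a quadratic non-residue. -/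
theorem stmt_5 (ℓ : ℕ) (hℓ : ℓ.Prime) (hℓodd : ℓ ≠ 2) (d : (ZMod ℓ)ˣ) (t : ZMod ℓ) :
    ((∃ u : (ZMod ℓ)ˣ, t ^ 2 - 4 * (d : ZMod ℓ) = (u : ZMod ℓ) ^ 2) →
      Nat.card {γ : Matrix.GeneralLinearGroup (Fin 2) (ZMod ℓ) //
          (γ : Matrix (Fin 2) (Fin 2) (ZMod ℓ)).det = (d : ZMod ℓ) ∧
          Matrix.trace (γ : Matrix (Fin 2) (Fin 2) (ZMod ℓ)) = t} = ℓ ^ 2 + ℓ) ∧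
    (t ^ 2 - 4 * (d : ZMod ℓ) = 0 →
      Nat.card {γ : Matrix.GeneralLinearGroup (Fin 2) (ZMod ℓ) //
          (γ : Matrix (Fin 2) (Fin 2) (ZMod ℓ)).det = (d : ZMod ℓ) ∧
          Matrix.trace (γ : Matrix (Fin 2) (Fin 2) (ZMod ℓ)) = t} = ℓ ^ 2) ∧
    ((IsUnit (t ^ 2 - 4 * (d : ZMod ℓ)) ∧
        ¬∃ u : (ZMod ℓ)ˣ, t ^ 2 - 4 * (d : ZMod ℓ) = (u : ZMod ℓ) ^ 2) →
      Nat.card {γ : Matrix.GeneralLinearGroup (Fin 2) (ZMod ℓ) //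
          (γ : Matrix (Fin 2) (Fin 2) (ZMod ℓ)).det = (d : ZMod ℓ) ∧
          Matrix.trace (γ : Matrix (Fin 2) (Fin 2) (ZMod ℓ)) = t} = ℓ ^ 2 - ℓ) := by
  haveI : Fact ℓ.Prime := ⟨hℓ⟩
  have hℓ2 : 2 ≤ ℓ := hℓ.two_le
  have h2 : (2 : ZMod ℓ) ≠ 0 := by
    have : ((2 : ℕ) : ZMod ℓ) ≠ 0 := by
      rw [Ne, ZMod.natCast_eq_zero_iff]
      intro h
      exact hℓodd ((Nat.prime_dvd_prime_iff_eq hℓ Nat.prime_two).mp h)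
    simpa using this
  have key : Nat.card {γ : Matrix.GeneralLinearGroup (Fin 2) (ZMod ℓ) //
      (γ : Matrix (Fin 2) (Fin 2) (ZMod ℓ)).det = (d : ZMod ℓ) ∧
      Matrix.trace (γ : Matrix (Fin 2) (Fin 2) (ZMod ℓ)) = t} =
      ℓ * (ℓ - 1) + (Finset.univ.filter fun s : ZMod ℓ =>
        s ^ 2 = t ^ 2 - 4 * (d : ZMod ℓ)).card * ℓ := by
    rw [Nat.card_congr (gl_matrix_equiv d t), main_count, root_count _ _ h2, ZMod.card]
  refine ⟨?_, ?_, ?_⟩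
  · rintro ⟨u, hu⟩
    have hfil : (Finset.univ.filter fun s : ZMod ℓ =>
        s ^ 2 = t ^ 2 - 4 * (d : ZMod ℓ)).card = 2 := by
      have heq : (Finset.univ.filter fun s : ZMod ℓ =>
          s ^ 2 = t ^ 2 - 4 * (d : ZMod ℓ)) =
          (Finset.univ.filter fun s : ZMod ℓ => s ^ 2 = (u : ZMod ℓ) ^ 2) := by
        ext s; simp [hu]
      rw [heq]
      exact sq_filter_sq _ u.ne_zero h2
    rw [key, hfil]
    obtain ⟨k, rfl⟩ : ∃ k, ℓ = k + 1 := ⟨ℓ - 1, by omega⟩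
    simp only [Nat.add_sub_cancel]
    ring
  · intro h0
    have hfil : (Finset.univ.filter fun s : ZMod ℓ =>
        s ^ 2 = t ^ 2 - 4 * (d : ZMod ℓ)).card = 1 := by
      have heq : (Finset.univ.filter fun s : ZMod ℓ =>
          s ^ 2 = t ^ 2 - 4 * (d : ZMod ℓ)) =
          (Finset.univ.filter fun s : ZMod ℓ => s ^ 2 = (0 : ZMod ℓ)) := by
        ext s; simp [h0]
      rw [heq]
      exact sq_filter_zero
    rw [key, hfil]
    obtain ⟨k, rfl⟩ : ∃ k, ℓ = k + 1 := ⟨ℓ - 1, by omega⟩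
    simp only [Nat.add_sub_cancel]
    ring
  · rintro ⟨hunit, hnsq⟩
    have hfil : (Finset.univ.filter fun s : ZMod ℓ =>
        s ^ 2 = t ^ 2 - 4 * (d : ZMod ℓ)).card = 0 :=
      sq_filter_nonsq _ hunit.ne_zero hnsq
    rw [key, hfil]
    obtain ⟨k, rfl⟩ : ∃ k, ℓ = k + 1 := ⟨ℓ - 1, by omega⟩
    simp only [Nat.add_sub_cancel, zero_mul, add_zero]
    have e : (k + 1) ^ 2 = (k + 1) * k + (k + 1) := by ring
    omega
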